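/- Let A ⊆ F_q with q^{1/2} ≲ |A| ≲ q^{13/21}. Then max(|A+A|, |A·A·A|) ≥ c |A|^{9/5} / q^{2/5} for an absolute constant c > 0. -/

import Mathlib

open Finset Pointwise

section AuxSumProduct

variable {F : Type} [Field F] [Fintype F] [DecidableEq F]


def dfun (L : Finset (F × F)) (π : F × F) : ℕ :=
  (L.filter (fun l => π.2 = l.1 * (π.1 - l.2))).card

lemma line_card (a b : F) :
    ((Finset.univ : Finset (F × F)).filter (fun π => π.2 = a * (π.1 - b))).card
      = Fintype.card F := by
  rw [← Finset.card_univ (α := F)]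
  apply Finset.card_bij (fun π _ => π.1)
  · intro π _; exact Finset.mem_univ _
  · intro π hπ π' hπ' h
    simp only [Finset.mem_filter] at hπ hπ'
    exact Prod.ext h (by rw [hπ.2, hπ'.2, h])
  · intro x _
    exact ⟨(x, a * (x - b)), by simp, rfl⟩

lemma two_lines (l l' : F × F) (hl : l.1 ≠ 0) (hne : l ≠ l') :
    ((Finset.univ : Finset (F × F)).filter
      (fun π => π.2 = l.1 * (π.1 - l.2) ∧ π.2 = l'.1 * (π.1 - l'.2))).card ≤ 1 := by
  rw [Finset.card_le_one]
  intro π hπ π' hπ'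
  simp only [Finset.mem_filter] at hπ hπ'
  obtain ⟨-, h1, h2⟩ := hπ
  obtain ⟨-, h1', h2'⟩ := hπ'
  by_cases hx : π.1 = π'.1
  · exact Prod.ext hx (by rw [h1, h1', hx])
  · exfalso
    have e1 : l.1 * (π.1 - l.2) = l'.1 * (π.1 - l'.2) := by rw [← h1, h2]
    have e2 : l.1 * (π'.1 - l.2) = l'.1 * (π'.1 - l'.2) := by rw [← h1', h2']
    have hz : (l.1 - l'.1) * (π.1 - π'.1) = 0 := by linear_combination e1 - e2
    have hs : l.1 = l'.1 := by
      rcases mul_eq_zero.1 hz with h | h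
      · exact sub_eq_zero.1 h
      · exact absurd (sub_eq_zero.1 h) hx
    have hb : l.2 = l'.2 := by
      have e3 : l.1 * (π.1 - l.2) = l.1 * (π.1 - l'.2) := by rw [e1, ← hs]
      have := mul_left_cancel₀ hl e3
      linear_combination -this
    exact hne (Prod.ext hs hb)

lemma ite_mul_ite_nat (p q : Prop) [Decidable p] [Decidable q] :
    (if p then (1:ℕ) else 0) * (if q then 1 else 0) = if p ∧ q then 1 else 0 := by
  by_cases hp : p <;> by_cases hq : q <;> simp [hp, hq]

lemma sum_dfun (L : Finset (F × F)) :
    ∑ π : F × F, dfun L π = Fintype.card F * L.card := by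
  unfold dfun
  simp_rw [Finset.card_filter]
  rw [Finset.sum_comm]
  have : ∀ l ∈ L, (∑ π : F × F, if π.2 = l.1 * (π.1 - l.2) then 1 else 0) = Fintype.card F := by
    intro l _
    rw [← Finset.card_filter]
    exact line_card l.1 l.2
  rw [Finset.sum_congr rfl this, Finset.sum_const, smul_eq_mul, mul_comm]

lemma sum_dfun_sq (L : Finset (F × F)) (hL : ∀ l ∈ L, l.1 ≠ 0) :
    ∑ π : F × F, (dfun L π) ^ 2 ≤ Fintype.card F * L.card + L.card ^ 2 := by
  have key : ∀ π : F × F, (dfun L π) ^ 2 = ∑ l ∈ L, ∑ l' ∈ L,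
      (if π.2 = l.1 * (π.1 - l.2) ∧ π.2 = l'.1 * (π.1 - l'.2) then 1 else 0) := by
    intro π
    rw [dfun, Finset.card_filter, sq, Finset.sum_mul_sum]
    simp_rw [ite_mul_ite_nat]
  simp_rw [key]
  rw [Finset.sum_comm]
  have step : ∀ l ∈ L, (∑ π : F × F, ∑ l' ∈ L,
      (if π.2 = l.1 * (π.1 - l.2) ∧ π.2 = l'.1 * (π.1 - l'.2) then 1 else 0))
      ≤ Fintype.card F + L.card := by
    intro l hl
    have hterm : ∀ l' ∈ L, (∑ π : F × F,
        (if π.2 = l.1 * (π.1 - l.2) ∧ π.2 = l'.1 * (π.1 - l'.2) then 1 else 0))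
        ≤ (if l = l' then Fintype.card F else 0) + 1 := by
      intro l' _
      rw [← Finset.card_filter]
      split_ifs with h
      · subst h
        have : ((Finset.univ : Finset (F × F)).filter
            (fun π => π.2 = l.1 * (π.1 - l.2) ∧ π.2 = l.1 * (π.1 - l.2))).card
            ≤ Fintype.card F := by
          refine le_trans (Finset.card_le_card ?_) (le_of_eq (line_card l.1 l.2))
          intro x hx
          simp only [Finset.mem_filter] at hx ⊢
          exact ⟨hx.1, hx.2.1⟩
        omega
      · simpa using two_lines l l' (hL l hl) h
    calc (∑ π : F × F, ∑ l' ∈ L,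
          (if π.2 = l.1 * (π.1 - l.2) ∧ π.2 = l'.1 * (π.1 - l'.2) then 1 else 0))
        = ∑ l' ∈ L, ∑ π : F × F,
          (if π.2 = l.1 * (π.1 - l.2) ∧ π.2 = l'.1 * (π.1 - l'.2) then 1 else 0) :=
          Finset.sum_comm
      _ ≤ ∑ l' ∈ L, ((if l = l' then Fintype.card F else 0) + 1) :=
          Finset.sum_le_sum hterm
      _ = (∑ l' ∈ L, (if l = l' then Fintype.card F else 0)) + L.card := by
          rw [Finset.sum_add_distrib, Finset.sum_const, smul_eq_mul, mul_one]
      _ ≤ Fintype.card F + L.card := by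
          rw [Finset.sum_ite_eq]
          split_ifs <;> omega
  calc (∑ l ∈ L, ∑ π : F × F, ∑ l' ∈ L,
        (if π.2 = l.1 * (π.1 - l.2) ∧ π.2 = l'.1 * (π.1 - l'.2) then 1 else 0))
      ≤ ∑ _l ∈ L, (Fintype.card F + L.card) := Finset.sum_le_sum step
    _ = L.card * (Fintype.card F + L.card) := by rw [Finset.sum_const, smul_eq_mul]
    _ = Fintype.card F * L.card + L.card ^ 2 := by ring

lemma incidence_lower (A : Finset F) :
    (A.erase 0).card * A.card * A.card ≤
      ∑ π ∈ (A + A) ×ˢ (A * A), dfun ((A.erase 0) ×ˢ A) π := by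
  have hsum : ∑ π ∈ (A + A) ×ˢ (A * A), dfun ((A.erase 0) ×ˢ A) π
      = ((((A + A) ×ˢ (A * A)) ×ˢ ((A.erase 0) ×ˢ A)).filter
          (fun z => z.1.2 = z.2.1 * (z.1.1 - z.2.2))).card := by
    rw [Finset.card_filter, Finset.sum_product]
    simp only [dfun, Finset.card_filter, Finset.sum_product]
  rw [hsum]
  have hcard : (A.erase 0).card * A.card * A.card
      = ((A.erase 0) ×ˢ (A ×ˢ A)).card := by
    simp [Finset.card_product, mul_assoc]
  rw [hcard]
  apply Finset.card_le_card_of_injOn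
    (fun x => ((x.2.1 + x.2.2, x.1 * x.2.2), (x.1, x.2.1)))
  · rintro ⟨a, b, c⟩ hx
    simp only [Finset.mem_coe, Finset.mem_product] at hx
    obtain ⟨ha, hb, hc⟩ := hx
    simp only [Finset.mem_coe, Finset.mem_filter, Finset.mem_product]
    refine ⟨⟨⟨Finset.add_mem_add hb hc, Finset.mul_mem_mul (Finset.mem_of_mem_erase ha) hc⟩,
      ha, hb⟩, ?_⟩
    ring
  · rintro ⟨a, b, c⟩ - ⟨a', b', c'⟩ - h
    simp only [Prod.mk.injEq] at h
    obtain ⟨⟨h1, -⟩, h3, h4⟩ := h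
    subst h3; subst h4
    have : c = c' := by linear_combination h1
    simp [this]

lemma key_ineq (A : Finset F) :
    (((A.erase 0).card : ℝ) * A.card * A.card) ≤
      ((A.erase 0).card : ℝ) * A.card * (((A + A).card : ℝ) * ((A * A).card)) / (Fintype.card F)
      + Real.sqrt ((((A + A).card : ℝ) * ((A * A).card)) *
          ((Fintype.card F : ℝ) * (((A.erase 0).card : ℝ) * A.card))) := by
  set L : Finset (F × F) := (A.erase 0) ×ˢ A with hLdef
  set PP : Finset (F × F) := (A + A) ×ˢ (A * A) with hPPdef
  have hq0 : 0 < (Fintype.card F : ℝ) := by positivity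
  set q : ℝ := (Fintype.card F : ℝ)
  set m : ℝ := (L.card : ℝ)
  set D : ℝ := (PP.card : ℝ) with hDdef
  have hm : m = ((A.erase 0).card : ℝ) * A.card := by
    simp [m, hLdef, Finset.card_product]
  have hD : D = ((A + A).card : ℝ) * ((A * A).card) := by
    simp [D, hPPdef, Finset.card_product]
  have hL0 : ∀ l ∈ L, l.1 ≠ 0 := by
    intro l hl
    rw [hLdef, Finset.mem_product] at hl
    exact Finset.ne_of_mem_erase hl.1
  -- real-valued facts
  have hsum : ∑ π : F × F, (dfun L π : ℝ) = q * m := by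
    rw [← Nat.cast_sum, sum_dfun L]
    push_cast
    rfl
  have hsq : ∑ π : F × F, (dfun L π : ℝ) ^ 2 ≤ q * m + m ^ 2 := by
    have := sum_dfun_sq L hL0
    calc ∑ π : F × F, (dfun L π : ℝ) ^ 2
        = ((∑ π : F × F, (dfun L π) ^ 2 : ℕ) : ℝ) := by push_cast; ring_nf
      _ ≤ ((Fintype.card F * L.card + L.card ^ 2 : ℕ) : ℝ) := by exact_mod_cast this
      _ = q * m + m ^ 2 := by push_cast; ring
  have hcardP : ((Finset.univ : Finset (F × F)).card : ℝ) = q * q := by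
    rw [Finset.card_univ, Fintype.card_prod]; push_cast; ring
  set μ : ℝ := m / q with hμ
  have hg2 : ∑ π : F × F, ((dfun L π : ℝ) - μ) ^ 2 ≤ q * m := by
    have expand : ∑ π : F × F, ((dfun L π : ℝ) - μ) ^ 2
        = (∑ π : F × F, (dfun L π : ℝ) ^ 2) - 2 * μ * (∑ π : F × F, (dfun L π : ℝ))
          + ((Finset.univ : Finset (F × F)).card : ℝ) * μ ^ 2 := by
      rw [Finset.sum_congr rfl (fun π _ => by ring :
        ∀ π ∈ (Finset.univ : Finset (F × F)), ((dfun L π : ℝ) - μ) ^ 2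
          = (dfun L π : ℝ) ^ 2 - 2 * μ * (dfun L π : ℝ) + μ ^ 2)]
      rw [Finset.sum_add_distrib, Finset.sum_sub_distrib, ← Finset.mul_sum,
        Finset.sum_const, nsmul_eq_mul]
    rw [expand, hsum, hcardP]
    have : (∑ π : F × F, (dfun L π : ℝ) ^ 2) - 2 * μ * (q * m) + q * q * μ ^ 2
        = (∑ π : F × F, (dfun L π : ℝ) ^ 2) - m ^ 2 := by
      have hmq : m / q * q = m := div_mul_cancel₀ m hq0.ne'
      rw [hμ]
      linear_combination (m / q * q - m) * hmq
    rw [this]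
    linarith [hsq]
  -- Cauchy-Schwarz
  have hCS : (∑ π ∈ PP, ((dfun L π : ℝ) - μ)) ^ 2 ≤ D * (q * m) := by
    have h1 := Finset.sum_mul_sq_le_sq_mul_sq PP (fun _ => (1:ℝ)) (fun π => (dfun L π : ℝ) - μ)
    simp only [one_mul, one_pow] at h1
    have h2 : (∑ _π ∈ PP, (1:ℝ)) = D := by simp [D]
    have h3 : ∑ π ∈ PP, ((dfun L π : ℝ) - μ) ^ 2 ≤ q * m :=
      le_trans (Finset.sum_le_sum_of_subset_of_nonneg (Finset.subset_univ PP)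
        (fun _ _ _ => sq_nonneg _)) hg2
    calc (∑ π ∈ PP, ((dfun L π : ℝ) - μ)) ^ 2
        ≤ (∑ _π ∈ PP, (1:ℝ)) * ∑ π ∈ PP, ((dfun L π : ℝ) - μ) ^ 2 := h1
      _ = D * ∑ π ∈ PP, ((dfun L π : ℝ) - μ) ^ 2 := by rw [h2]
      _ ≤ D * (q * m) := by
          apply mul_le_mul_of_nonneg_left h3
          rw [hDdef]
          positivity
  have hup : (∑ π ∈ PP, (dfun L π : ℝ)) ≤ m * D / q + Real.sqrt (D * (q * m)) := by
    have e1 : (∑ π ∈ PP, (dfun L π : ℝ))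
        = (∑ π ∈ PP, ((dfun L π : ℝ) - μ)) + μ * D := by
      rw [Finset.sum_sub_distrib, Finset.sum_const, nsmul_eq_mul, hDdef]
      ring
    rw [e1]
    have e2 : (∑ π ∈ PP, ((dfun L π : ℝ) - μ)) ≤ Real.sqrt (D * (q * m)) := by
      calc (∑ π ∈ PP, ((dfun L π : ℝ) - μ))
          ≤ |∑ π ∈ PP, ((dfun L π : ℝ) - μ)| := le_abs_self _
        _ = Real.sqrt ((∑ π ∈ PP, ((dfun L π : ℝ) - μ)) ^ 2) := (Real.sqrt_sq_eq_abs _).symm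
        _ ≤ Real.sqrt (D * (q * m)) := Real.sqrt_le_sqrt hCS
    have e3 : μ * D = m * D / q := by rw [hμ]; ring
    linarith
  have hlow : (((A.erase 0).card : ℝ) * A.card * A.card) ≤ ∑ π ∈ PP, (dfun L π : ℝ) := by
    have := incidence_lower A
    calc (((A.erase 0).card : ℝ) * A.card * A.card)
        = (((A.erase 0).card * A.card * A.card : ℕ) : ℝ) := by push_cast; ring
      _ ≤ ((∑ π ∈ PP, dfun L π : ℕ) : ℝ) := by exact_mod_cast this
      _ = ∑ π ∈ PP, (dfun L π : ℝ) := by push_cast; ring_nf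
  calc (((A.erase 0).card : ℝ) * A.card * A.card) ≤ ∑ π ∈ PP, (dfun L π : ℝ) := hlow
    _ ≤ m * D / q + Real.sqrt (D * (q * m)) := hup
    _ = ((A.erase 0).card : ℝ) * A.card * (((A + A).card : ℝ) * ((A * A).card)) / q
        + Real.sqrt ((((A + A).card : ℝ) * ((A * A).card)) * (q * (((A.erase 0).card : ℝ) * A.card))) := by
        rw [hm, hD]

end AuxSumProduct

lemma card_mul_le_card_mul3 {F : Type} [Field F] [DecidableEq F] (A : Finset F)
    (h : (A.erase 0).Nonempty) : (A * A).card ≤ (A * A * A).card := by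
  obtain ⟨a, ha⟩ := h
  have ha0 : a ≠ 0 := Finset.ne_of_mem_erase ha
  have haA : a ∈ A := Finset.mem_of_mem_erase ha
  apply Finset.card_le_card_of_injOn (fun x => a * x)
  · intro x hx
    rw [Finset.mem_coe, Finset.mem_mul] at hx
    obtain ⟨y, hy, z, hz, rfl⟩ := hx
    have e : a * (y * z) = a * y * z := by ring
    simp only [e]
    exact Finset.mul_mem_mul (Finset.mul_mem_mul haA hy) hz
  · exact fun x _ y _ hxy => mul_left_cancel₀ ha0 hxy

set_option maxHeartbeats 2000000 in
theorem sum_triple_product_range (C₁ : ℝ) (hC₁ : 0 < C₁) :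
    ∃ c : ℝ, 0 < c ∧ ∀ (F : Type) [Field F] [Fintype F] [DecidableEq F] (A : Finset F),
      Real.sqrt (Fintype.card F) ≤ C₁ * A.card →
      (A.card : ℝ) ≤ C₁ * (Fintype.card F : ℝ) ^ ((13 : ℝ) / 21) →
      c * (A.card : ℝ) ^ ((9 : ℝ) / 5) / (Fintype.card F : ℝ) ^ ((2 : ℝ) / 5) ≤
        max ((A + A).card : ℝ) ((A * A * A).card : ℝ) := by
  set c : ℝ := (3 * (1 + C₁) ^ 2)⁻¹ with hcdef
  have hu1 : (1:ℝ) ≤ 1 + C₁ := by linarith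
  have hu0 : (0:ℝ) < 1 + C₁ := by linarith
  have hc0 : 0 < c := by rw [hcdef]; positivity
  have hc1 : c ≤ 1 := by
    rw [hcdef]
    rw [inv_le_one_iff₀]
    right
    nlinarith
  have hcsq : c ^ 2 = (9 * (1 + C₁) ^ 4)⁻¹ := by
    rw [hcdef]
    field_simp
    ring
  -- constant bounds
  have hCpow3 : ∀ e : ℝ, 0 ≤ e → e ≤ 3 → C₁ ^ e ≤ (1 + C₁) ^ 3 := by
    intro e he0 he3
    calc C₁ ^ e ≤ (1 + C₁) ^ e := Real.rpow_le_rpow hC₁.le (by linarith) he0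
      _ ≤ (1 + C₁) ^ (3:ℝ) := Real.rpow_le_rpow_of_exponent_le hu1 he3
      _ = (1 + C₁) ^ (3:ℕ) := by
          rw [← Real.rpow_natCast (1 + C₁) 3]
          norm_num
  have hconst1 : c ^ 2 * C₁ ^ ((13:ℝ)/5) ≤ 1 / 2 := by
    have h3 : C₁ ^ ((13:ℝ)/5) ≤ (1 + C₁) ^ 3 := hCpow3 _ (by norm_num) (by norm_num)
    have hC0 : 0 ≤ C₁ ^ ((13:ℝ)/5) := Real.rpow_nonneg hC₁.le _
    rw [hcsq]
    rw [inv_mul_le_iff₀ (by positivity)]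
    nlinarith [pow_le_pow_left₀ (le_of_lt (by linarith : (0:ℝ) < 1)) hu1 4,
      sq_nonneg ((1+C₁)^2), sq_nonneg (1+C₁)]
  have hconst2 : 8 * c ^ 2 * C₁ ^ ((2:ℝ)/5) ≤ 1 := by
    have h3 : C₁ ^ ((2:ℝ)/5) ≤ (1 + C₁) ^ 3 := hCpow3 _ (by norm_num) (by norm_num)
    have hC0 : 0 ≤ C₁ ^ ((2:ℝ)/5) := Real.rpow_nonneg hC₁.le _
    rw [hcsq]
    have key : 8 * (9 * (1 + C₁) ^ 4)⁻¹ * (1 + C₁) ^ 3 ≤ 1 := by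
      rw [mul_comm (8:ℝ), mul_assoc, ← div_eq_inv_mul]
      rw [div_le_one (by positivity)]
      nlinarith [pow_le_pow_left₀ (le_of_lt (by linarith : (0:ℝ) < 1)) hu1 4]
    calc 8 * (9 * (1 + C₁) ^ 4)⁻¹ * C₁ ^ ((2:ℝ)/5)
        ≤ 8 * (9 * (1 + C₁) ^ 4)⁻¹ * (1 + C₁) ^ 3 := by
          apply mul_le_mul_of_nonneg_left h3 (by positivity)
      _ ≤ 1 := key
  refine ⟨c, hc0, ?_⟩
  intro F _ _ _ A hq hA
  set q' : ℝ := (Fintype.card F : ℝ) with hq'def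
  set n : ℝ := (A.card : ℝ) with hndef
  set M : ℝ := max ((A + A).card : ℝ) ((A * A * A).card : ℝ) with hMdef
  have hq'1 : (1:ℝ) ≤ q' := by
    rw [hq'def]
    exact_mod_cast Fintype.card_pos
  have hq'0 : (0:ℝ) < q' := by linarith
  have hAne : A.Nonempty := by
    rw [Finset.nonempty_iff_ne_empty]
    intro h
    have hn : n = 0 := by rw [hndef, h]; simp
    rw [hn, mul_zero] at hq
    have : (0:ℝ) < Real.sqrt q' := Real.sqrt_pos.mpr hq'0
    linarith
  have hn1 : (1:ℝ) ≤ n := by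
    rw [hndef]
    exact_mod_cast Finset.card_pos.mpr hAne
  have hn0 : (0:ℝ) < n := by linarith
  have hs1 : (1:ℝ) ≤ ((A + A).card : ℝ) := by
    exact_mod_cast Finset.card_pos.mpr (hAne.add hAne)
  have hM1 : (1:ℝ) ≤ M := le_trans hs1 (le_max_left _ _)
  have hM0 : (0:ℝ) ≤ M := by linarith
  have hq25 : (1:ℝ) ≤ q' ^ ((2:ℝ)/5) := Real.one_le_rpow hq'1 (by norm_num)
  by_cases h2 : 2 ≤ A.card
  · -- main case
    have hA0ne : (A.erase 0).Nonempty := by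
      rw [← Finset.card_pos]
      have := Finset.pred_card_le_card_erase (s := A) (a := 0)
      omega
    set n₀ : ℝ := ((A.erase 0).card : ℝ) with hn₀def
    have hn₀1 : (1:ℝ) ≤ n₀ := by
      rw [hn₀def]
      exact_mod_cast Finset.card_pos.mpr hA0ne
    have hn₀0 : (0:ℝ) < n₀ := by linarith
    have hn₀half : n / 2 ≤ n₀ := by
      have h := Finset.pred_card_le_card_erase (s := A) (a := 0)
      have : (A.card : ℝ) - 1 ≤ n₀ := by
        rw [hn₀def]
        have : ((A.card - 1 : ℕ) : ℝ) ≤ ((A.erase 0).card : ℝ) := by exact_mod_cast h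
        rw [Nat.cast_sub (by omega)] at this
        simpa using this
      have hn2 : (2:ℝ) ≤ n := by rw [hndef]; exact_mod_cast h2
      rw [← hndef] at this
      linarith
    have hsM : ((A + A).card : ℝ) ≤ M := le_max_left _ _
    have hpM : ((A * A).card : ℝ) ≤ M := by
      calc ((A * A).card : ℝ) ≤ ((A * A * A).card : ℝ) := by
            exact_mod_cast card_mul_le_card_mul3 A hA0ne
        _ ≤ M := le_max_right _ _
    have hsp : ((A + A).card : ℝ) * ((A * A).card : ℝ) ≤ M * M :=
      mul_le_mul hsM hpM (by positivity) hM0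
    have hkey := key_ineq A
    rw [← hn₀def, ← hndef, ← hq'def] at hkey
    -- upper bound RHS by M
    have hub : n₀ * n * n ≤ n₀ * n * (M * M) / q' + M * Real.sqrt (q' * (n₀ * n)) := by
      have t1 : n₀ * n * (((A + A).card : ℝ) * ((A * A).card)) / q'
          ≤ n₀ * n * (M * M) / q' := by gcongr
      have t2 : Real.sqrt ((((A + A).card : ℝ) * ((A * A).card)) * (q' * (n₀ * n)))
          ≤ M * Real.sqrt (q' * (n₀ * n)) := by
        calc Real.sqrt ((((A + A).card : ℝ) * ((A * A).card)) * (q' * (n₀ * n)))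
            ≤ Real.sqrt ((M * M) * (q' * (n₀ * n))) :=
              Real.sqrt_le_sqrt (by apply mul_le_mul_of_nonneg_right hsp; positivity)
          _ = M * Real.sqrt (q' * (n₀ * n)) := by
              rw [Real.sqrt_mul (mul_self_nonneg M), Real.sqrt_mul_self hM0]
      linarith [hkey]
    -- reduce goal to squared form
    suffices hfin : (c * n ^ ((9:ℝ)/5) / q' ^ ((2:ℝ)/5)) ^ 2 ≤ M ^ 2 by
      have h1 : 0 ≤ c * n ^ ((9:ℝ)/5) / q' ^ ((2:ℝ)/5) := by positivity
      have h2 := Real.sqrt_le_sqrt hfin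
      rwa [Real.sqrt_sq h1, Real.sqrt_sq hM0] at h2
    have e1 : (n ^ ((9:ℝ)/5)) ^ 2 = n ^ ((18:ℝ)/5) := by
      rw [← Real.rpow_natCast (n ^ ((9:ℝ)/5)) 2, ← Real.rpow_mul hn0.le]
      norm_num
    have e2 : (q' ^ ((2:ℝ)/5)) ^ 2 = q' ^ ((4:ℝ)/5) := by
      rw [← Real.rpow_natCast (q' ^ ((2:ℝ)/5)) 2, ← Real.rpow_mul hq'0.le]
      norm_num
    have hexp2 : (c * n ^ ((9:ℝ)/5) / q' ^ ((2:ℝ)/5)) ^ 2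
        = c ^ 2 * n ^ ((18:ℝ)/5) / q' ^ ((4:ℝ)/5) := by
      rw [div_pow, mul_pow, e1, e2]
    rw [hexp2]
    rcases le_or_gt (n₀ * n * n) (2 * (n₀ * n * (M * M) / q')) with hcase | hcase
    · -- sum-dominated case : M*M ≥ n*q'/2
      have h' : n₀ * n * n * q' ≤ 2 * (n₀ * n * (M * M)) := by
        have hstep : n₀ * n * n ≤ (2 * (n₀ * n * (M * M))) / q' :=
          le_of_le_of_eq hcase (by ring)
        exact (le_div_iff₀ hq'0).mp hstep
      have hpos : 0 < n₀ * n := by positivity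
      have hMM : n * q' ≤ 2 * (M * M) := by
        have h'' : (n₀ * n) * (n * q') ≤ (n₀ * n) * (2 * (M * M)) := by
          calc (n₀ * n) * (n * q') = n₀ * n * n * q' := by ring
            _ ≤ 2 * (n₀ * n * (M * M)) := h'
            _ = (n₀ * n) * (2 * (M * M)) := by ring
        exact le_of_mul_le_mul_left h'' hpos
      have hcore : c ^ 2 * n ^ ((13:ℝ)/5) ≤ q' ^ ((9:ℝ)/5) / 2 := by
        have hb1 : n ^ ((13:ℝ)/5) ≤ C₁ ^ ((13:ℝ)/5) * q' ^ ((169:ℝ)/105) := by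
          calc n ^ ((13:ℝ)/5) ≤ (C₁ * q' ^ ((13:ℝ)/21)) ^ ((13:ℝ)/5) :=
                Real.rpow_le_rpow hn0.le hA (by norm_num)
            _ = C₁ ^ ((13:ℝ)/5) * (q' ^ ((13:ℝ)/21)) ^ ((13:ℝ)/5) :=
                Real.mul_rpow hC₁.le (Real.rpow_nonneg hq'0.le _)
            _ = C₁ ^ ((13:ℝ)/5) * q' ^ ((169:ℝ)/105) := by
                rw [← Real.rpow_mul hq'0.le]
                norm_num
        have hb2 : q' ^ ((169:ℝ)/105) ≤ q' ^ ((9:ℝ)/5) :=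
          Real.rpow_le_rpow_of_exponent_le hq'1 (by norm_num)
        calc c ^ 2 * n ^ ((13:ℝ)/5)
            ≤ c ^ 2 * (C₁ ^ ((13:ℝ)/5) * q' ^ ((169:ℝ)/105)) :=
              mul_le_mul_of_nonneg_left hb1 (sq_nonneg c)
          _ ≤ c ^ 2 * (C₁ ^ ((13:ℝ)/5) * q' ^ ((9:ℝ)/5)) := by
              have := mul_le_mul_of_nonneg_left hb2 (Real.rpow_nonneg hC₁.le ((13:ℝ)/5))
              exact mul_le_mul_of_nonneg_left this (sq_nonneg c)
          _ = (c ^ 2 * C₁ ^ ((13:ℝ)/5)) * q' ^ ((9:ℝ)/5) := by ring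
          _ ≤ (1/2) * q' ^ ((9:ℝ)/5) :=
              mul_le_mul_of_nonneg_right hconst1 (Real.rpow_nonneg hq'0.le _)
          _ = q' ^ ((9:ℝ)/5) / 2 := by ring
      have hsplitn : n ^ ((18:ℝ)/5) = n ^ ((13:ℝ)/5) * n := by
        rw [show (18:ℝ)/5 = 13/5 + 1 by norm_num, Real.rpow_add hn0, Real.rpow_one]
      have hsplitq : q' ^ ((9:ℝ)/5) = q' * q' ^ ((4:ℝ)/5) := by
        rw [show (9:ℝ)/5 = 1 + 4/5 by norm_num, Real.rpow_add hq'0, Real.rpow_one]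
      have hq45 : (0:ℝ) < q' ^ ((4:ℝ)/5) := Real.rpow_pos_of_pos hq'0 _
      calc c ^ 2 * n ^ ((18:ℝ)/5) / q' ^ ((4:ℝ)/5)
          = (c ^ 2 * n ^ ((13:ℝ)/5)) * (n / q' ^ ((4:ℝ)/5)) := by rw [hsplitn]; ring
        _ ≤ (q' ^ ((9:ℝ)/5) / 2) * (n / q' ^ ((4:ℝ)/5)) :=
            mul_le_mul_of_nonneg_right hcore (by positivity)
        _ = (n * q') / 2 := by
            rw [hsplitq]
            field_simp
        _ ≤ M * M := by linarith
        _ = M ^ 2 := (sq M).symm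
    · -- sqrt-dominated case
      have hhalf : n₀ * n * n / 2 ≤ M * Real.sqrt (q' * (n₀ * n)) := by linarith
      have hsq' : (n₀ * n * n / 2) ^ 2 ≤ (M * Real.sqrt (q' * (n₀ * n))) ^ 2 :=
        pow_le_pow_left₀ (by positivity) hhalf 2
      have hexp : (M * Real.sqrt (q' * (n₀ * n))) ^ 2 = M ^ 2 * (q' * (n₀ * n)) := by
        rw [mul_pow, Real.sq_sqrt (by positivity)]
      have hpos : 0 < n₀ * n := by positivity
      have h1 : n₀ * n ^ 3 ≤ 4 * (M ^ 2) * q' := by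
        have hA' : (n₀ * n) * (n₀ * n ^ 3) ≤ (n₀ * n) * (4 * (M ^ 2) * q') := by
          calc (n₀ * n) * (n₀ * n ^ 3) = 4 * ((n₀ * n * n / 2) ^ 2) := by ring
            _ ≤ 4 * ((M * Real.sqrt (q' * (n₀ * n))) ^ 2) := by linarith
            _ = 4 * (M ^ 2 * (q' * (n₀ * n))) := by rw [hexp]
            _ = (n₀ * n) * (4 * (M ^ 2) * q') := by ring
        exact le_of_mul_le_mul_left hA' hpos
      have hquart : n ^ 4 ≤ 8 * q' * (M * M) := by
        have hn2n₀ : n ≤ 2 * n₀ := by linarith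
        have hstep : n ^ 4 ≤ 2 * (n₀ * n ^ 3) := by
          calc n ^ 4 = n * n ^ 3 := by ring
            _ ≤ (2 * n₀) * n ^ 3 := mul_le_mul_of_nonneg_right hn2n₀ (by positivity)
            _ = 2 * (n₀ * n ^ 3) := by ring
        calc n ^ 4 ≤ 2 * (n₀ * n ^ 3) := hstep
          _ ≤ 2 * (4 * (M ^ 2) * q') := by linarith
          _ = 8 * q' * (M * M) := by ring
      have hcore2 : 8 * c ^ 2 * q' ^ ((1:ℝ)/5) ≤ n ^ ((2:ℝ)/5) := by
        have hhalfq : q' ^ ((1:ℝ)/2) ≤ C₁ * n := by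
          rw [← Real.sqrt_eq_rpow]
          exact hq
        have h15 : q' ^ ((1:ℝ)/5) = (q' ^ ((1:ℝ)/2)) ^ ((2:ℝ)/5) := by
          rw [← Real.rpow_mul hq'0.le]
          norm_num
        have hle : (q' ^ ((1:ℝ)/2)) ^ ((2:ℝ)/5) ≤ (C₁ * n) ^ ((2:ℝ)/5) :=
          Real.rpow_le_rpow (Real.rpow_nonneg hq'0.le _) hhalfq (by norm_num)
        have hmul : (C₁ * n) ^ ((2:ℝ)/5) = C₁ ^ ((2:ℝ)/5) * n ^ ((2:ℝ)/5) :=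
          Real.mul_rpow hC₁.le hn0.le
        calc 8 * c ^ 2 * q' ^ ((1:ℝ)/5)
            = 8 * c ^ 2 * (q' ^ ((1:ℝ)/2)) ^ ((2:ℝ)/5) := by rw [h15]
          _ ≤ 8 * c ^ 2 * (C₁ ^ ((2:ℝ)/5) * n ^ ((2:ℝ)/5)) := by
              rw [← hmul]
              exact mul_le_mul_of_nonneg_left hle (by positivity)
          _ = (8 * c ^ 2 * C₁ ^ ((2:ℝ)/5)) * n ^ ((2:ℝ)/5) := by ring
          _ ≤ 1 * n ^ ((2:ℝ)/5) :=
              mul_le_mul_of_nonneg_right hconst2 (Real.rpow_nonneg hn0.le _)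
          _ = n ^ ((2:ℝ)/5) := one_mul _
      have h45 : q' ^ ((4:ℝ)/5) * q' ^ ((1:ℝ)/5) = q' := by
        rw [← Real.rpow_add hq'0, show (4:ℝ)/5 + 1/5 = (1:ℝ) by norm_num, Real.rpow_one]
      have hn4 : n ^ ((18:ℝ)/5) * n ^ ((2:ℝ)/5) = n ^ 4 := by
        rw [← Real.rpow_add hn0, show (18:ℝ)/5 + 2/5 = ((4:ℕ):ℝ) by norm_num,
          Real.rpow_natCast]
      have hq45 : (0:ℝ) < q' ^ ((4:ℝ)/5) := Real.rpow_pos_of_pos hq'0 _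
      have hq15 : (0:ℝ) < q' ^ ((1:ℝ)/5) := Real.rpow_pos_of_pos hq'0 _
      calc c ^ 2 * n ^ ((18:ℝ)/5) / q' ^ ((4:ℝ)/5)
          = (8 * c ^ 2 * q' ^ ((1:ℝ)/5)) * (n ^ ((18:ℝ)/5) / (8 * q')) := by
            rw [show (8 * c ^ 2 * q' ^ ((1:ℝ)/5)) * (n ^ ((18:ℝ)/5) / (8 * q'))
                = (8 * c ^ 2 * q' ^ ((1:ℝ)/5) * n ^ ((18:ℝ)/5)) / (8 * q') by ring]
            rw [div_eq_div_iff (ne_of_gt hq45) (by positivity)]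
            linear_combination (-(8 * c ^ 2 * n ^ ((18:ℝ)/5))) * h45
        _ ≤ n ^ ((2:ℝ)/5) * (n ^ ((18:ℝ)/5) / (8 * q')) :=
            mul_le_mul_of_nonneg_right hcore2 (by positivity)
        _ = n ^ 4 / (8 * q') := by rw [← hn4]; ring
        _ ≤ M ^ 2 := by
            rw [div_le_iff₀ (by positivity)]
            calc n ^ 4 ≤ 8 * q' * (M * M) := hquart
              _ = M ^ 2 * (8 * q') := by ring
  · -- |A| = 1
    have hcard1 : A.card = 1 := by
      have := Finset.card_pos.mpr hAne
      omega
    have hn_eq : n = 1 := by rw [hndef, hcard1]; norm_num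
    rw [hn_eq, Real.one_rpow, mul_one]
    calc c / q' ^ ((2:ℝ)/5) ≤ c / 1 := by
          apply div_le_div_of_nonneg_left hc0.le (by norm_num) hq25
      _ = c := div_one c
      _ ≤ 1 := hc1
      _ ≤ M := hM1
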